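/- Let m, n ∈ ℕ. If g ∈ S_n is an n-cycle and h ∈ S_m has cycle type α, then the element (h,1,…,1;g) of S_m ≀ S_n, regarded as a permutation of {1,…,m} × {1,…,n}, has cycle type nα, where nα is the partition of mn obtained by multiplying every part of α by n. -/

import Mathlib

/- ## Common definitions -/

open Equiv Finset
open scoped Classical

noncomputable section

namespace CD

/-! ### Border strips and border-strip tableaux -/

/-- Two cells of a Young diagram are adjacent if they share an edge. -/
def Adj (c d : ℕ × ℕ) : Prop :=
  (c.1 = d.1 ∧ (c.2 + 1 = d.2 ∨ d.2 + 1 = c.2)) ∨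
  (c.2 = d.2 ∧ (c.1 + 1 = d.1 ∨ d.1 + 1 = c.1))

/-- A finite set of cells is (edge-)connected. -/
def IsConnectedSet (s : Finset (ℕ × ℕ)) : Prop :=
  ∀ c ∈ s, ∀ d ∈ s, Relation.ReflTransGen (fun x y => y ∈ s ∧ Adj x y) c d

/-- A set of cells contains no 2 × 2 square. -/
def NoSquare (s : Finset (ℕ × ℕ)) : Prop :=
  ∀ i j : ℕ, ¬ ((i, j) ∈ s ∧ (i + 1, j) ∈ s ∧ (i, j + 1) ∈ s ∧ (i + 1, j + 1) ∈ s)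

/-- `ν / μ` is a border strip: it is connected and contains no 2 × 2 square. -/
def IsBorderStrip (μ ν : YoungDiagram) : Prop :=
  μ ≤ ν ∧ (ν.cells \ μ.cells).Nonempty ∧ IsConnectedSet (ν.cells \ μ.cells) ∧
    NoSquare (ν.cells \ μ.cells)

/-- `ν / μ` is a border strip of length `l`. -/
def IsBorderStripOfSize (μ ν : YoungDiagram) (l : ℕ) : Prop :=
  IsBorderStrip μ ν ∧ (ν.cells \ μ.cells).card = l

/-- The height of a set of cells: one less than the number of nonempty rows. -/
def heightOf (s : Finset (ℕ × ℕ)) : ℕ := (s.image Prod.fst).card - 1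

/-- The row number of a set of cells: the index of the lowest-numbered row it meets. -/
def rowNum (s : Finset (ℕ × ℕ)) : ℕ := sInf {i | ∃ j, (i, j) ∈ s}

/-- A border-strip tableau of shape `lam / μ` and type `α`, encoded as the chain of
partitions `μ = λ⁰ ⊆ λ¹ ⊆ ⋯ ⊆ λᵏ = lam` in which the `j`-th strip `λʲ⁺¹ / λʲ` is a
border strip of length `α_j`.  (The chain is frozen at `lam` beyond `α.length`.) -/
structure BST (μ lam : YoungDiagram) (α : List ℕ) where
  c : ℕ → YoungDiagram
  c_zero : c 0 = μ
  c_top : ∀ j, α.length ≤ j → c j = lam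
  strip : ∀ j, j < α.length → IsBorderStripOfSize (c j) (c (j + 1)) (α.getD j 0)

/-- The cells of the `j`-th border strip of a border-strip tableau. -/
def stepCells {μ lam : YoungDiagram} {α : List ℕ} (T : BST μ lam α) (j : ℕ) :
    Finset (ℕ × ℕ) :=
  (T.c (j + 1)).cells \ (T.c j).cells

/-- The sign of a border-strip tableau: `(-1)` to the sum of the heights of its strips. -/
def sgnBST {μ lam : YoungDiagram} {α : List ℕ} (T : BST μ lam α) : ℤ :=
  (-1) ^ (∑ j ∈ Finset.range α.length, heightOf (stepCells T j))

/-- `γ^{⋆m}`: the composition obtained from `γ` by repeating each part `m` times. -/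
def starComp (m : ℕ) (γ : List ℕ) : List ℕ := (γ.map (List.replicate m)).flatten

/-- An `m`-border-strip tableau of shape `lam/μ` and type `γ`: a border-strip tableau of
type `γ^{⋆m}` such that for each part of `γ` the row numbers of the `m` consecutive
strips corresponding to its `m` copies are weakly decreasing. -/
structure MBST (m : ℕ) (μ lam : YoungDiagram) (γ : List ℕ) extends BST μ lam (starComp m γ) where
  rows : ∀ j, j < γ.length → ∀ s, s + 1 < m →
    rowNum (stepCells toBST (j * m + s + 1)) ≤ rowNum (stepCells toBST (j * m + s))

/-- `a_{λ/μ,γ}`: the sum of the signs of all `m`-border-strip tableaux of shape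
`lam/μ` and type `γ`. -/
def aCoeff (m : ℕ) (μ lam : YoungDiagram) (γ : List ℕ) : ℤ :=
  ∑ᶠ T : MBST m μ lam γ, sgnBST T.toBST

/-! ### Cycle types and skew characters -/

/-- The cycle type of a permutation as a partition of `|β|`, i.e. including parts
equal to `1` for the fixed points. -/
def fullCycleType {β : Type*} [Fintype β] [DecidableEq β] (g : Equiv.Perm β) : Multiset ℕ :=
  g.cycleType + Multiset.replicate (Fintype.card β - g.support.card) 1

/-- A canonical list (weakly increasing) listing the parts of a multiset. -/
def sortedList (M : Multiset ℕ) : List ℕ := M.sort (· ≤ ·)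

/-- The skew character `χ^{λ/μ}`, defined (via the Murnaghan–Nakayama rule) as a
function on an arbitrary finite permutation group. -/
def skewChar (μ lam : YoungDiagram) {β : Type*} [Fintype β] [DecidableEq β]
    (g : Equiv.Perm β) : ℂ :=
  ((aCoeff 1 μ lam (sortedList (fullCycleType g)) : ℤ) : ℂ)

/-- The Young diagram whose row lengths are the parts of the multiset `M`. -/
def ydOfMultiset (M : Multiset ℕ) : YoungDiagram :=
  YoungDiagram.ofRowLens (M.sort (· ≥ ·)) (Multiset.pairwise_sort _ _).sortedGE

/-- The irreducible character `χ^ν` of the symmetric group labelled by the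
partition `ν`. -/
def chiP {n : ℕ} (ν : Nat.Partition n) {β : Type*} [Fintype β] [DecidableEq β]
    (g : Equiv.Perm β) : ℂ :=
  skewChar ⊥ (ydOfMultiset ν.parts) g

/-- `g_α`: a permutation of cycle type `α` (defined by choice; the identity if no such
permutation exists). -/
def permOf (β : Type*) [Fintype β] [DecidableEq β] (M : Multiset ℕ) : Equiv.Perm β :=
  if h : ∃ g : Equiv.Perm β, fullCycleType g = M then h.choose else 1

/-- `z_α`: the order of the centralizer of an element of cycle type `α`. -/
def zOf (β : Type*) [Fintype β] [DecidableEq β] (M : Multiset ℕ) : ℕ :=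
  Nat.card (Subgroup.centralizer {permOf β M})


/-! ### Characters of finite groups -/

/-- `φ` is a character of `G`: it is afforded by some finite-dimensional complex
representation. -/
def IsChar {G : Type} [Group G] (φ : G → ℂ) : Prop :=
  ∃ V : FDRep ℂ G, ∀ g, V.character g = φ g

/-- `φ` is an irreducible character of `G`. -/
def IsIrrChar {G : Type} [Group G] (φ : G → ℂ) : Prop :=
  ∃ V : FDRep ℂ G, CategoryTheory.Simple V ∧ ∀ g, V.character g = φ g

/-- `ψ`, a function on `G`, restricts to a character of the subgroup `H`. -/
def IsCharOn {G : Type} [Group G] (H : Subgroup G) (ψ : G → ℂ) : Prop :=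
  ∃ V : FDRep ℂ H, ∀ (w : G) (hw : w ∈ H), V.character ⟨w, hw⟩ = ψ w

/-- The usual inner product of class functions on a finite group. -/
def innerChar {G : Type*} [Group G] [Fintype G] (φ ψ : G → ℂ) : ℂ :=
  (Nat.card G : ℂ)⁻¹ * ∑ g : G, φ g * (starRingEnd ℂ) (ψ g)

/-- The inner product of two functions over a subgroup `H` of `G`. -/
def innerOn {G : Type*} [Group G] [Fintype G] (H : Subgroup G) (φ ψ : G → ℂ) : ℂ :=
  (Nat.card H : ℂ)⁻¹ * ∑ g : G, if g ∈ H then φ g * (starRingEnd ℂ) (ψ g) else 0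

/-- The induced character along an (injective) group homomorphism `f : H →* G`. -/
def indHom {H G : Type*} [Group H] [Group G] [Fintype H] [Fintype G]
    (f : H →* G) (φ : H → ℂ) (g : G) : ℂ :=
  (Nat.card H : ℂ)⁻¹ * ∑ x : G, ∑ h : H, if x⁻¹ * g * x = f h then φ h else 0

/-- Transport of permutations along an equivalence, as a group homomorphism. -/
def permCongrHom {α β : Type*} (e : α ≃ β) : Equiv.Perm α →* Equiv.Perm β where
  toFun g := (e.symm.trans g).trans e
  map_one' := by ext x; simp
  map_mul' a b := by ext x; simp

/-- The character of `S_{ℓ 0} × ⋯ × S_{ℓ (d-1)}` induced to the symmetric group `S_m`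
(realized on `Fin m`), where the Young subgroup is embedded via an equivalence
`(Σ i, Fin (ℓ i)) ≃ Fin m` and `θs i` is a character of `S_{ℓ i}`; the induced
character does not depend on the choice of equivalence. -/
def youngIndAt {d : ℕ} (ℓ : Fin d → ℕ) {m : ℕ} (hm : ∑ i, ℓ i = m)
    (θs : ∀ i, Equiv.Perm (Fin (ℓ i)) → ℂ) (g : Equiv.Perm (Fin m)) : ℂ :=
  indHom ((permCongrHom ((Fintype.equivFin ((i : Fin d) × Fin (ℓ i))).trans
      (finCongr (by simpa using hm)))).comp
      (Equiv.Perm.sigmaCongrRightHom fun i : Fin d => Fin (ℓ i)))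
    (fun k => ∏ i, θs i (k i)) g

/-! ### The wreath product `S_m ≀ S_n` as a subgroup of `S_{mn}` -/

/-- The element `(h₁,…,hₙ; g)` of the wreath product, as a permutation of
`Fin m × J`; it sends `(i, j)` to `(k (g j) i, g j)`. -/
def wr {m : ℕ} {J : Type*} (k : J → Equiv.Perm (Fin m)) (g : Equiv.Perm J) :
    Equiv.Perm (Fin m × J) where
  toFun p := (k (g p.2) p.1, g p.2)
  invFun p := ((k p.2).symm p.1, g.symm p.2)
  left_inv p := by simp
  right_inv p := by simp

/-- The wreath product `S_m ≀ S_J` as a subgroup of the permutations of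
`Fin m × J`. -/
def wreath (m : ℕ) (J : Type*) : Subgroup (Equiv.Perm (Fin m × J)) where
  carrier := {w | ∃ k g, w = wr k g}
  one_mem' := ⟨fun _ => 1, 1, by ext p <;> simp [wr]⟩
  mul_mem' := by
    rintro w w' ⟨k, g, rfl⟩ ⟨k', g', rfl⟩
    exact ⟨fun j => k j * k' (g⁻¹ j), g * g', by
      ext p <;> simp [wr, Equiv.Perm.mul_apply]⟩
  inv_mem' := by
    rintro w ⟨k, g, rfl⟩
    have h1 : wr (fun j => (k (g j))⁻¹) g⁻¹ * wr k g = 1 := by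
      ext p <;> simp [wr, Equiv.Perm.mul_apply]
    exact ⟨fun j => (k (g j))⁻¹, g⁻¹, (eq_inv_of_mul_eq_one_left h1).symm⟩

/-- The embedding of the base group `B = S_m × ⋯ × S_m` in the wreath product. -/
def baseHom (m : ℕ) (J : Type*) : (J → Equiv.Perm (Fin m)) →* Equiv.Perm (Fin m × J) where
  toFun k := wr k 1
  map_one' := by ext p <;> simp [wr]
  map_mul' k k' := by ext p <;> simp [wr, Equiv.Perm.mul_apply]

/-- The permutation of `J` induced by an element of the wreath product on the blocks. -/
def sndPerm {m : ℕ} {J : Type*} (w : Equiv.Perm (Fin m × J)) : Equiv.Perm J :=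
  if h : ∃ f : Equiv.Perm J, ∀ p, (w p).2 = f p.2 then h.choose else 1

/-- The permutation of the fiber `Fin m × {j}` induced by `w ^ c`; for `w` in the
wreath product and `c` the length of the cycle of `j`, this is (a conjugate of) the
cycle product of the base-group coordinates of `w` along the cycle of `j`. -/
def fiberPerm {m : ℕ} {J : Type*} (w : Equiv.Perm (Fin m × J)) (j : J) (c : ℕ) :
    Equiv.Perm (Fin m) :=
  if h : Function.Bijective (fun i : Fin m => ((w ^ c) (i, j)).1) then
    Equiv.ofBijective _ h else 1

/-- `j` is the canonical representative of its cycle under `g`. -/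
def repMin {J : Type*} [Fintype J] (g : Equiv.Perm J) (j : J) : Prop :=
  ∀ t : ℕ, Fintype.equivFin J j ≤ Fintype.equivFin J ((g ^ t) j)

/-- The character `θ̃^{×n}` of the wreath product afforded by `V^{⊗n}`, where the base
group acts factorwise and the top group permutes the factors: its value on
`(h₁,…,hₙ; g)` is the product over the cycles of `g` of `θ` evaluated at the product
of the `hᵢ` along the cycle. -/
def thetaTilde {m : ℕ} {J : Type*} [Fintype J] (θ : Equiv.Perm (Fin m) → ℂ)
    (w : Equiv.Perm (Fin m × J)) : ℂ :=
  ∏ j ∈ Finset.univ.filter (repMin (sndPerm w)),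
    θ (fiberPerm w j (Function.minimalPeriod (sndPerm w) j))

/-- The inflation `Inf χ^ν` of the irreducible character `χ^ν` of `S_n` along the
canonical surjection `S_m ≀ S_n ↠ S_n`. -/
def inflChi {n : ℕ} (ν : Nat.Partition n) {m : ℕ} {J : Type*} [Fintype J] [DecidableEq J]
    (w : Equiv.Perm (Fin m × J)) : ℂ :=
  chiP ν (sndPerm w)

/-- The deflation map `Def^θ_{S_n}` (composed with restriction from `S_{mn}`): the
virtual character `ψ ↦ Σ_ν ⟨Res_W ψ, θ̃^{×n}·Inf χ^ν⟩_W · χ^ν`, which sends the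
irreducible character `θ̃^{×n}·Inf χ^ν` of `W = S_m ≀ S_n` to `χ^ν` and every other
irreducible character of `W` to `0`. -/
def defl (m : ℕ) {J : Type*} [Fintype J] [DecidableEq J] (θ : Equiv.Perm (Fin m) → ℂ)
    (ψ : Equiv.Perm (Fin m × J) → ℂ) (x : Equiv.Perm J) : ℂ :=
  ∑ ν : Nat.Partition (Fintype.card J),
    innerOn (wreath m J) ψ (fun w => thetaTilde θ w * inflChi ν w) * chiP ν x


/-! ### Abacus displays, `n`-quotients, `n`-signs -/

/-- The beta-set (first-column hook lengths) of `lam` displayed with `b` beads. -/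
def betaSet (lam : YoungDiagram) (b : ℕ) : Finset ℕ :=
  (Finset.range b).image fun i => lam.rowLen i + (b - 1 - i)

/-- The beta-set read off runner `i` of an `n`-runner abacus display with `b` beads. -/
def runnerBeta (n b i : ℕ) (lam : YoungDiagram) : Finset ℕ :=
  ((betaSet lam b).filter fun p => p % n = i).image fun p => p / n

/-- The multiset of parts of the partition whose beta-set is `S`. -/
def partsOfBeta (S : Finset ℕ) : Multiset ℕ :=
  S.val.map fun x => x - (S.filter fun y => y < x).card

/-- The `i`-th component of the `n`-quotient of `lam`, computed from an abacus display
with `b` beads. -/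
def quotYD (n b i : ℕ) (lam : YoungDiagram) : YoungDiagram :=
  ydOfMultiset (partsOfBeta (runnerBeta n b i lam))

/-- A standard number of beads to use for abacus displays related to `lam`:
a multiple of `n` exceeding the number of rows of `lam`. -/
def stdB (n : ℕ) (lam : YoungDiagram) : ℕ := n * (lam.card + 1)

/-- The `i`-th component `(μ^{(i)}, λ^{(i)})` of the `n`-quotient of the skew
partition `lam/μ` (both read from `n`-runner abacus displays with the same number of
beads). -/
def nQuotSkew (n : ℕ) (μ lam : YoungDiagram) (i : ℕ) : YoungDiagram × YoungDiagram :=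
  (quotYD n (stdB n lam) i μ, quotYD n (stdB n lam) i lam)

/-- `lam/μ` is `n`-decomposable: there is a border-strip tableau of shape `lam/μ` and
type `(n, …, n)` (`m` parts). -/
def IsNDecomp (n m : ℕ) (μ lam : YoungDiagram) : Prop :=
  Nonempty (BST μ lam (List.replicate m n))

/-- The `n`-sign `ε_n(λ/μ)`: the common sign of the border-strip tableaux of shape
`lam/μ` and type `(n^m)` (equivalently, the sign of the relabelling permutation of the
corresponding abacus displays). -/
def epsN (n m : ℕ) (μ lam : YoungDiagram) : ℤ :=
  if h : Nonempty (BST μ lam (List.replicate m n)) then sgnBST h.some else 1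

/-- `lam` has empty `n`-core: every runner of an `n`-runner abacus display of `lam`
carries the same number of beads as for the empty partition. -/
def HasEmptyNCore (n : ℕ) (lam : YoungDiagram) : Prop :=
  ∀ i < n, ((betaSet lam (stdB n lam)).filter fun p => p % n = i).card = stdB n lam / n

/-- `lam/μ` is a horizontal strip: no two of its boxes lie in the same column. -/
def IsHorizontalStrip (μ lam : YoungDiagram) : Prop :=
  μ ≤ lam ∧ ∀ i i' j : ℕ, (i, j) ∈ lam.cells \ μ.cells → (i', j) ∈ lam.cells \ μ.cells → i = i'

/-- An `n`-quotient border-strip tableau of shape given by the components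
`(μs i, lams i)` and type `α`: an `n`-tuple of chains, exactly one of which grows by a
border strip of length `α_j` at step `j`. -/
structure NQuotBST (n : ℕ) (μs lams : Fin n → YoungDiagram) (α : List ℕ) where
  c : Fin n → ℕ → YoungDiagram
  c_zero : ∀ i, c i 0 = μs i
  c_top : ∀ i, ∀ j, α.length ≤ j → c i j = lams i
  step : ∀ j, j < α.length → ∃ i₀, IsBorderStripOfSize (c i₀ j) (c i₀ (j + 1)) (α.getD j 0)
      ∧ ∀ i, i ≠ i₀ → c i (j + 1) = c i j

/-- The product of the signs of the components of an `n`-quotient border-strip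
tableau. -/
def sgnNQ {n : ℕ} {μs lams : Fin n → YoungDiagram} {α : List ℕ}
    (Q : NQuotBST n μs lams α) : ℤ :=
  ∏ i : Fin n,
    (-1 : ℤ) ^ (∑ j ∈ Finset.range α.length, heightOf ((Q.c i (j + 1)).cells \ (Q.c i j).cells))

/-! ### Symmetric functions in power-sum coordinates -/

/-- The ring of symmetric functions with rational coefficients, presented as the
polynomial ring `ℚ[p₁, p₂, …]` in the power sums; the variable `X i` is `p_{i+1}`. -/
abbrev SymF := MvPolynomial ℕ ℚ

/-- The power-sum symmetric function `p_l`. -/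
def pSym (l : ℕ) : SymF := MvPolynomial.X (l - 1)

/-- The product `p_M` over a multiset of parts. -/
def pProdM (M : Multiset ℕ) : SymF := (M.map pSym).prod

/-- The product `p_γ = p_{γ₁} ⋯ p_{γ_d}` over a composition. -/
def pProdL (γ : List ℕ) : SymF := (γ.map pSym).prod

/-- `z_M` for a multiset of parts: `∏ k k^{m_k} m_k!`. -/
def zMult (M : Multiset ℕ) : ℕ :=
  M.prod * ∏ k ∈ M.toFinset, (M.count k).factorial

/-- The algebra endomorphism of `Λ` sending `p_k` to `p_{kl}`. -/
def frob (l : ℕ) : SymF →ₐ[ℚ] SymF :=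
  MvPolynomial.aeval fun k => MvPolynomial.X ((k + 1) * l - 1)

/-- Plethysm `f ∘ g` of symmetric functions: the unique `ℚ`-algebra map in `f`
with `p_l ∘ g = g(p_k ↦ p_{kl})`. -/
def plethysm (f g : SymF) : SymF :=
  MvPolynomial.aeval (fun i => frob (i + 1) g) f

/-- The complete homogeneous symmetric function `h_m = Σ_{α ⊢ m} p_α / z_α`. -/
def hSym (m : ℕ) : SymF :=
  ∑ α : Nat.Partition m, ((zMult α.parts : ℚ)⁻¹) • pProdM α.parts

/-- The skew Schur function
`s_{λ/μ} = Σ_{α ⊢ |λ/μ|} z_α⁻¹ χ^{λ/μ}(α) p_α`. -/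
def skewSchur (μ lam : YoungDiagram) : SymF :=
  ∑ α : Nat.Partition (lam.card - μ.card),
    (((zMult α.parts : ℚ)⁻¹) * ((aCoeff 1 μ lam (sortedList α.parts) : ℤ) : ℚ)) • pProdM α.parts

/-- The Schur function `s_κ` of a partition `κ`. -/
def schurOf {m : ℕ} (κ : Nat.Partition m) : SymF := skewSchur ⊥ (ydOfMultiset κ.parts)

/-- `z` of an exponent vector: `∏ i (i+1)^{d i} (d i)!`. -/
def zExp (d : ℕ →₀ ℕ) : ℕ := d.prod fun i e => (i + 1) ^ e * e.factorial

/-- The Hall inner product on `Λ`, for which `⟨p_λ, p_μ⟩ = δ_{λμ} z_λ`. -/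
def hallInner (f g : SymF) : ℚ :=
  ∑ d ∈ f.support, f.coeff d * g.coeff d * (zExp d : ℚ)


section Aux

variable {β : Type*} [Fintype β] [DecidableEq β]

private lemma isPeriodicPt_perm_iff {σ : Equiv.Perm β} {x : β} {t : ℕ} :
    Function.IsPeriodicPt ⇑σ t x ↔ (σ ^ t) x = x := Iff.rfl

private lemma perm_minimalPeriod_pos (σ : Equiv.Perm β) (x : β) :
    0 < Function.minimalPeriod ⇑σ x := by
  apply Function.IsPeriodicPt.minimalPeriod_pos (orderOf_pos σ)
  rw [isPeriodicPt_perm_iff, pow_orderOf_eq_one]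
  rfl

private lemma minimalPeriod_eq_of_pows_agree {σ τ : Equiv.Perm β} {x : β}
    (H : ∀ t : ℕ, (σ ^ t) x = (τ ^ t) x) :
    Function.minimalPeriod ⇑σ x = Function.minimalPeriod ⇑τ x := by
  apply Nat.dvd_antisymm
  · apply Function.IsPeriodicPt.minimalPeriod_dvd
    rw [isPeriodicPt_perm_iff, H]
    exact isPeriodicPt_perm_iff.1 (Function.isPeriodicPt_minimalPeriod ⇑τ x)
  · apply Function.IsPeriodicPt.minimalPeriod_dvd
    rw [isPeriodicPt_perm_iff, ← H]
    exact isPeriodicPt_perm_iff.1 (Function.isPeriodicPt_minimalPeriod ⇑σ x)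

private lemma isCycle_minimalPeriod {σ : Equiv.Perm β} (hσ : σ.IsCycle) {x : β}
    (hx : σ x ≠ x) : Function.minimalPeriod ⇑σ x = σ.support.card := by
  rw [← hσ.orderOf]
  apply Nat.dvd_antisymm
  · apply Function.IsPeriodicPt.minimalPeriod_dvd
    rw [isPeriodicPt_perm_iff, pow_orderOf_eq_one]
    rfl
  · apply orderOf_dvd_of_pow_eq_one
    exact (hσ.pow_eq_one_iff' hx).2
      (isPeriodicPt_perm_iff.1 (Function.isPeriodicPt_minimalPeriod ⇑σ x))

private lemma disjoint_pow_apply {σ τ : Equiv.Perm β} (hd : σ.Disjoint τ) {x : β}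
    (hx : σ x ≠ x) (t : ℕ) : ((σ * τ) ^ t) x = (σ ^ t) x := by
  have hτ : τ x = x := (hd x).resolve_left hx
  rw [hd.commute.mul_pow, Equiv.Perm.mul_apply,
    Equiv.Perm.pow_apply_eq_self_of_apply_eq_self hτ]

private lemma cycleType_bind (σ : Equiv.Perm β) :
    σ.cycleType.bind (fun d => Multiset.replicate d d)
      = σ.support.val.map (fun x => Function.minimalPeriod ⇑σ x) := by
  induction σ using Equiv.Perm.cycle_induction_on with
  | base_one => simp
  | base_cycles σ hσ =>
      rw [hσ.cycleType]
      rw [Multiset.singleton_bind]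
      rw [Multiset.map_congr rfl
        (fun x hx => isCycle_minimalPeriod hσ (Equiv.Perm.mem_support.1 hx))]
      rw [Multiset.map_const']
      rfl
  | induction_disjoint σ τ hd hσ ih1 ih2 =>
      rw [hd.cycleType_mul, Multiset.add_bind, ih1, ih2, hd.support_mul,
        ← Finset.disjUnion_eq_union _ _ hd.disjoint_support]
      show _ = Multiset.map _ (σ.support.val + τ.support.val)
      rw [Multiset.map_add]
      congr 1
      · apply Multiset.map_congr rfl
        intro x hx
        exact (minimalPeriod_eq_of_pows_agree
          (disjoint_pow_apply hd (Equiv.Perm.mem_support.1 hx))).symm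
      · apply Multiset.map_congr rfl
        intro x hx
        have := minimalPeriod_eq_of_pows_agree
          (disjoint_pow_apply hd.symm (Equiv.Perm.mem_support.1 hx))
        rw [← hd.commute.eq] at this
        exact this.symm

private lemma bind_replicate (c : ℕ) (a : ℕ) (f : ℕ → Multiset ℕ) :
    (Multiset.replicate c a).bind f = c • f a := by
  induction c with
  | zero => simp
  | succ c ih => rw [Multiset.replicate_succ, Multiset.cons_bind, ih, succ_nsmul, add_comm]

private lemma fullCycleType_bind (σ : Equiv.Perm β) :
    (fullCycleType σ).bind (fun d => Multiset.replicate d d)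
      = (Finset.univ.val : Multiset β).map (fun x => Function.minimalPeriod ⇑σ x) := by
  rw [fullCycleType, Multiset.add_bind, cycleType_bind, bind_replicate,
    Multiset.replicate_one, Multiset.nsmul_singleton]
  rw [show (Finset.univ : Finset β)
      = Finset.disjUnion σ.support σ.supportᶜ disjoint_compl_right from
    by rw [Finset.disjUnion_eq_union, Finset.union_compl]]
  show _ = Multiset.map _ (σ.support.val + σ.supportᶜ.val)
  rw [Multiset.map_add]
  congr 1
  rw [Multiset.map_congr rfl (fun x hx => ?_), Multiset.map_const']
  · rw [show Multiset.card σ.supportᶜ.val = σ.supportᶜ.card from rfl, Finset.card_compl]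
  · have : σ x = x := by
      by_contra hc
      exact (Finset.mem_compl.1 hx) (Equiv.Perm.mem_support.2 hc)
    exact Function.minimalPeriod_eq_one_iff_isFixedPt.2 this

private lemma count_bind_rep (M : Multiset ℕ) (b : ℕ) :
    (M.bind (fun d => Multiset.replicate d d)).count b = b * M.count b := by
  induction M using Multiset.induction with
  | empty => simp
  | cons a M ih =>
      rw [Multiset.cons_bind, Multiset.count_add, ih, Multiset.count_cons,
        Multiset.count_replicate]
      rcases eq_or_ne a b with rfl | hne
      · simp [mul_add]; omega
      · simp [hne, Ne.symm hne]

private lemma bind_rep_cancel {M N : Multiset ℕ} (hM : ∀ x ∈ M, 0 < x) (hN : ∀ x ∈ N, 0 < x)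
    (h : M.bind (fun d => Multiset.replicate d d) = N.bind (fun d => Multiset.replicate d d)) :
    M = N := by
  ext b
  rcases Nat.eq_zero_or_pos b with rfl | hb
  · rw [Multiset.count_eq_zero.2 (fun hc => absurd (hM 0 hc) (lt_irrefl 0)),
      Multiset.count_eq_zero.2 (fun hc => absurd (hN 0 hc) (lt_irrefl 0))]
  · have := congrArg (Multiset.count b) h
    rw [count_bind_rep, count_bind_rep] at this
    exact Nat.eq_of_mul_eq_mul_left hb this

private lemma bind_rep_map_mul (n : ℕ) (M : Multiset ℕ) :
    (M.map (fun a => n * a)).bind (fun d => Multiset.replicate d d)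
      = n • ((M.bind (fun d => Multiset.replicate d d)).map (fun a => n * a)) := by
  induction M using Multiset.induction with
  | empty => simp
  | cons a M ih =>
      simp only [Multiset.map_cons, Multiset.cons_bind, Multiset.map_add, smul_add, ih]
      congr 1
      rw [Multiset.map_replicate, Multiset.nsmul_replicate]

private lemma bind_const_replicate {γ : Type*} (s : Multiset γ) (c : ℕ) (f : γ → ℕ) :
    s.bind (fun a => Multiset.replicate c (f a)) = c • s.map f := by
  induction s using Multiset.induction with
  | empty => simp
  | cons a s ih =>
      rw [Multiset.cons_bind, ih, Multiset.map_cons, ← Multiset.singleton_add,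
        smul_add, Multiset.nsmul_singleton]

private lemma map_fst_univ {γ δ : Type*} [Fintype γ] [Fintype δ] (F : γ → ℕ) :
    (Finset.univ.val : Multiset (γ × δ)).map (fun p => F p.1)
      = (Fintype.card δ) • ((Finset.univ.val : Multiset γ).map F) := by
  rw [← Finset.univ_product_univ, Finset.product_val]
  show Multiset.map _ (Multiset.bind _ fun a => Multiset.map (Prod.mk a) _) = _
  rw [Multiset.map_bind]
  rw [Multiset.bind_congr (g := fun a => Multiset.replicate (Fintype.card δ) (F a))
    (fun a _ => by
      rw [Multiset.map_map]
      show Multiset.map (fun _ => F a) _ = Multiset.replicate (Fintype.card δ) (F a)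
      rw [Multiset.map_const']
      rfl)]
  exact bind_const_replicate _ _ _

end Aux


set_option maxHeartbeats 1000000 in
/-- **Lemma 3.5.** If `g ∈ S_n` is an `n`-cycle and `h ∈ S_m` has cycle type `α`, then
`(h,1,…,1;g) ∈ S_m ≀ S_n`, regarded as a permutation of `{1,…,m} × {1,…,n}`, has cycle
type `nα`. -/
theorem wreath_cycle_type
    (m n : ℕ) (hm : 0 < m) (hn : 0 < n)
    (g : Equiv.Perm (Fin n)) (hg : fullCycleType g = {n})
    (h : Equiv.Perm (Fin m)) (α : Multiset ℕ) (hα : fullCycleType h = α) :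
    fullCycleType (wr (fun j => if j = (⟨0, hn⟩ : Fin n) then h else 1) g)
      = α.map fun a => n * a := by
  subst hα
  set z : Fin n := (⟨0, hn⟩ : Fin n) with hz
  set k : Fin n → Equiv.Perm (Fin m) := fun j => if j = z then h else 1 with hk
  set w : Equiv.Perm (Fin m × Fin n) := wr k g with hw
  -- facts about g
  have hgper : ∀ j : Fin n, Function.minimalPeriod ⇑g j = n := by
    rcases eq_or_ne n 1 with rfl | hn1
    · intro j
      have : g = 1 := by
        ext x
        omega
      rw [this]
      simp [Function.minimalPeriod_id]
    · have hn2 : 2 ≤ n := by omega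
      have h1mem : (1 : ℕ) ∉ ({n} : Multiset ℕ) := by
        simp; omega
      have hrep0 : Fintype.card (Fin n) - g.support.card = 0 := by
        by_contra hc
        apply h1mem
        rw [← hg]
        unfold fullCycleType
        rw [Multiset.mem_add]
        right
        exact Multiset.mem_replicate.2 ⟨hc, rfl⟩
      have hct : g.cycleType = {n} := by
        have := hg
        unfold fullCycleType at this
        rwa [hrep0, Multiset.replicate_zero, add_zero] at this
      have hcy : g.IsCycle := by
        rw [← Equiv.Perm.card_cycleType_eq_one, hct]
        rfl
      have hsupp : g.support.card = n := by
        rw [← Equiv.Perm.sum_cycleType, hct, Multiset.sum_singleton]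
      intro j
      have hj : j ∈ g.support := by
        have : g.support = Finset.univ := Finset.eq_univ_of_card _ (by simp [hsupp])
        rw [this]; exact Finset.mem_univ j
      rw [isCycle_minimalPeriod hcy (Equiv.Perm.mem_support.1 hj), hsupp]
  have hgn : g ^ n = 1 := by
    apply Equiv.ext
    intro j
    have := Function.iterate_minimalPeriod (f := ⇑g) (x := j)
    rw [hgper j] at this
    rw [Equiv.Perm.one_apply]
    exact this
  -- second coordinate of powers of w
  have hsnd : ∀ (t : ℕ) (p : Fin m × Fin n), ((w ^ t) p).2 = (g ^ t) p.2 := by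
    intro t
    induction t with
    | zero => intro p; simp
    | succ t ih =>
        intro p
        rw [pow_succ, Equiv.Perm.mul_apply, pow_succ, Equiv.Perm.mul_apply]
        have : (w p).2 = g p.2 := rfl
        rw [← this, ih]
  -- the key formula for powers of w up to n
  have hclaim : ∀ t, t ≤ n → ∀ (i : Fin m) (j : Fin n),
      (w ^ t) (i, j)
        = ((if ∃ s, 1 ≤ s ∧ s ≤ t ∧ (g ^ s) j = z then h else 1) i, (g ^ t) j) := by
    intro t
    induction t with
    | zero =>
        intro _ i j
        rw [pow_zero, pow_zero, if_neg (by rintro ⟨s, h1, h2, -⟩; omega)]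
        simp
    | succ t ih =>
        intro hle i j
        have ht : t ≤ n := by omega
        rw [pow_succ', Equiv.Perm.mul_apply, ih ht]
        have happ : ∀ (y : Fin m) (j' : Fin n), w (y, j') = (k (g j') y, g j') := fun _ _ => rfl
        rw [happ]
        have hgt : g ((g ^ t) j) = (g ^ (t + 1)) j := by
          rw [pow_succ', Equiv.Perm.mul_apply]
        rw [hgt]
        by_cases hc : (g ^ (t + 1)) j = z
        · have hnone : ¬ ∃ s, 1 ≤ s ∧ s ≤ t ∧ (g ^ s) j = z := by
            rintro ⟨s, hs1, hs2, hsz⟩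
            have hzz : (g ^ (t + 1 - s)) z = z := by
              conv_lhs => rw [← hsz]
              rw [← Equiv.Perm.mul_apply, ← pow_add, Nat.sub_add_cancel (by omega), hc]
            have hdvd : n ∣ (t + 1 - s) := by
              rw [← hgper z]
              exact Function.IsPeriodicPt.minimalPeriod_dvd (isPeriodicPt_perm_iff.2 hzz)
            have := Nat.le_of_dvd (by omega) hdvd
            omega
          have hsome : ∃ s, 1 ≤ s ∧ s ≤ t + 1 ∧ (g ^ s) j = z :=
            ⟨t + 1, by omega, le_refl _, hc⟩
          rw [if_neg hnone, if_pos hsome, hc]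
          simp [hk]
        · have hiff : (∃ s, 1 ≤ s ∧ s ≤ t + 1 ∧ (g ^ s) j = z)
              ↔ (∃ s, 1 ≤ s ∧ s ≤ t ∧ (g ^ s) j = z) := by
            constructor
            · rintro ⟨s, h1, h2, h3⟩
              rcases eq_or_ne s (t + 1) with rfl | hne
              · exact absurd h3 hc
              · exact ⟨s, h1, by omega, h3⟩
            · rintro ⟨s, h1, h2, h3⟩
              exact ⟨s, h1, by omega, h3⟩
          have hk1 : k ((g ^ (t + 1)) j) = 1 := by
            rw [hk]; simp [hc]
          rw [hk1, if_congr hiff rfl rfl]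
          simp
  -- w ^ n applies h once in each fiber
  have hwn : ∀ (i : Fin m) (j : Fin n), (w ^ n) (i, j) = (h i, j) := by
    have key : ∀ a b : ℕ, a ≤ b → b - a < n → (g ^ a) z = (g ^ b) z → a = b := by
      intro a b hab hbn heq
      have hd : (g ^ (b - a)) ((g ^ a) z) = (g ^ a) z := by
        conv_rhs => rw [heq]
        rw [← Equiv.Perm.mul_apply, ← pow_add, Nat.sub_add_cancel hab]
      have hdvd : n ∣ (b - a) := by
        rw [← hgper ((g ^ a) z)]
        exact Function.IsPeriodicPt.minimalPeriod_dvd (isPeriodicPt_perm_iff.2 hd)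
      rcases Nat.eq_zero_or_pos (b - a) with h0 | hpos
      · omega
      · have := Nat.le_of_dvd hpos hdvd; omega
    have hinj : Function.Injective (fun u : Fin n => (g ^ (u : ℕ)) z) := by
      intro u v huv
      simp only at huv
      apply Fin.ext
      rcases le_total (u : ℕ) (v : ℕ) with hle | hle
      · exact key _ _ hle (by omega) huv
      · exact (key _ _ hle (by omega) huv.symm).symm
    have hsurj := Finite.injective_iff_surjective.mp hinj
    intro i j
    obtain ⟨u, hu⟩ := hsurj j
    simp only at hu
    have hsome : ∃ s, 1 ≤ s ∧ s ≤ n ∧ (g ^ s) j = z := by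
      refine ⟨n - (u : ℕ), by omega, by omega, ?_⟩
      rw [← hu, ← Equiv.Perm.mul_apply, ← pow_add, Nat.sub_add_cancel (le_of_lt u.2), hgn]
      rfl
    rw [hclaim n le_rfl i j, if_pos hsome, hgn]
    rfl
  -- powers of w that are multiples of n
  have hwnq : ∀ (q : ℕ) (i : Fin m) (j : Fin n), (w ^ (n * q)) (i, j) = ((h ^ q) i, j) := by
    intro q
    induction q with
    | zero => intro i j; simp
    | succ q ih =>
        intro i j
        have : n * (q + 1) = n * q + n := by ring
        rw [this, pow_add, Equiv.Perm.mul_apply, hwn, ih]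
        rw [← Equiv.Perm.mul_apply, ← pow_succ]
  -- the minimal period of w
  have hminP : ∀ (i : Fin m) (j : Fin n),
      Function.minimalPeriod ⇑w (i, j) = n * Function.minimalPeriod ⇑h i := by
    intro i j
    set p := Function.minimalPeriod ⇑h i with hp
    have hppos : 0 < p := perm_minimalPeriod_pos h i
    apply Nat.dvd_antisymm
    · apply Function.IsPeriodicPt.minimalPeriod_dvd
      rw [isPeriodicPt_perm_iff, hwnq]
      have : (h ^ p) i = i := Function.iterate_minimalPeriod (f := ⇑h) (x := i)
      rw [this]
    · have hM : (w ^ (Function.minimalPeriod ⇑w (i, j))) (i, j) = (i, j) :=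
        Function.iterate_minimalPeriod (f := ⇑w) (x := (i, j))
      have hgM : (g ^ (Function.minimalPeriod ⇑w (i, j))) j = j := by
        have := congrArg Prod.snd hM
        rw [hsnd] at this
        exact this
      have hnM : n ∣ Function.minimalPeriod ⇑w (i, j) := by
        have := Function.IsPeriodicPt.minimalPeriod_dvd (isPeriodicPt_perm_iff.2 hgM)
        rwa [hgper j] at this
      obtain ⟨q, hq⟩ := hnM
      rw [hq] at hM
      rw [hwnq] at hM
      have hhq : (h ^ q) i = i := by
        have := congrArg Prod.fst hM
        exact this
      have : p ∣ q := Function.IsPeriodicPt.minimalPeriod_dvd (isPeriodicPt_perm_iff.2 hhq)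
      rw [hq]
      exact Nat.mul_dvd_mul_left n this
  -- conclude by comparing the multiset of minimal periods
  apply bind_rep_cancel
  · intro x hx
    unfold fullCycleType at hx
    rcases Multiset.mem_add.1 hx with hx | hx
    · exact lt_of_lt_of_le (by norm_num) (Equiv.Perm.two_le_of_mem_cycleType hx)
    · rw [Multiset.eq_of_mem_replicate hx]; norm_num
  · intro x hx
    obtain ⟨a, ha, rfl⟩ := Multiset.mem_map.1 hx
    have : 0 < a := by
      unfold fullCycleType at ha
      rcases Multiset.mem_add.1 ha with ha | ha
      · exact lt_of_lt_of_le (by norm_num) (Equiv.Perm.two_le_of_mem_cycleType ha)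
      · rw [Multiset.eq_of_mem_replicate ha]; norm_num
    positivity
  · rw [fullCycleType_bind, bind_rep_map_mul, fullCycleType_bind h]
    rw [Multiset.map_congr rfl (fun p _ => hminP p.1 p.2)]
    rw [map_fst_univ (fun i => n * Function.minimalPeriod ⇑h i), Fintype.card_fin]
    rw [Multiset.map_map]
    rfl

end CD
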